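/- Fix an integer q≥3 and set a(x) = ((q−1)e^x − e^{2x})/(e^x+q−1)³ for x≥0. Then there is a unique r(q)∈(−1,0) such that ∫_0^∞ x^{r(q)}·a(x) dx = 0; moreover ∫_0^∞ x^{r}·a(x) dx > 0 for every r∈(−1, r(q)) and ∫_0^∞ x^{r}·a(x) dx < 0 for every r∈(r(q), 0). -/

import Mathlib

open MeasureTheory Filter Topology Set

/-- `a(x) = ((q−1)e^x − e^{2x})/(e^x+q−1)³`. -/
noncomputable def afun (q : ℝ) (x : ℝ) : ℝ :=
  ((q - 1) * Real.exp x - Real.exp (2 * x)) / (Real.exp x + q - 1) ^ 3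

namespace SmoothAux

/-- The same function with `c = q - 1`. -/
noncomputable def af (c x : ℝ) : ℝ :=
  (c * Real.exp x - Real.exp (2 * x)) / (Real.exp x + c) ^ 3

noncomputable def Ff (c r : ℝ) : ℝ := ∫ x in Ioi (0:ℝ), x ^ r * af c x

noncomputable def Hh (c r : ℝ) : ℝ := Ff c r / (Real.log c) ^ r

variable {c : ℝ}

lemma den_pos (hc : 2 ≤ c) (x : ℝ) : 0 < Real.exp x + c := by
  have := Real.exp_pos x; linarith

lemma af_eq (x : ℝ) : af c x = Real.exp x * (c - Real.exp x) / (Real.exp x + c) ^ 3 := by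
  rw [af, two_mul, Real.exp_add]; ring_nf

lemma af_pos (hc : 2 ≤ c) {x : ℝ} (h : x < Real.log c) : 0 < af c x := by
  rw [af_eq]
  have h1 : Real.exp x < c := by
    rwa [← Real.lt_log_iff_exp_lt (by linarith : (0:ℝ) < c)]
  exact div_pos (mul_pos (Real.exp_pos x) (by linarith)) (pow_pos (den_pos hc x) 3)

lemma af_neg (hc : 2 ≤ c) {x : ℝ} (h : Real.log c < x) : af c x < 0 := by
  rw [af_eq]
  have h1 : c < Real.exp x := by
    rwa [← Real.log_lt_iff_lt_exp (by linarith : (0:ℝ) < c)]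
  exact div_neg_of_neg_of_pos (mul_neg_of_pos_of_neg (Real.exp_pos x) (by linarith))
    (pow_pos (den_pos hc x) 3)

lemma af_abs_le (hc : 2 ≤ c) {x : ℝ} (hx : 0 ≤ x) :
    |af c x| ≤ (c + 1) * Real.exp (-x) := by
  have hex := Real.exp_pos x
  have h1 : (1:ℝ) ≤ Real.exp x := Real.one_le_exp hx
  have hden : (0:ℝ) < (Real.exp x + c) ^ 3 := pow_pos (den_pos hc x) 3
  rw [af, abs_div, abs_of_pos hden]
  rw [div_le_iff₀ hden]
  have h2 : |c * Real.exp x - Real.exp (2 * x)| ≤ (c + 1) * Real.exp (2 * x) := by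
    have e2 : Real.exp (2 * x) = Real.exp x * Real.exp x := by
      rw [two_mul, Real.exp_add]
    have hcx : 0 < c * Real.exp x := by positivity
    have : c * Real.exp x ≤ c * Real.exp (2*x) := by
      rw [e2]; nlinarith
    rw [abs_sub_comm, abs_le]
    constructor <;> nlinarith [Real.exp_pos (2*x)]
  refine h2.trans ?_
  have h3 : Real.exp x ^ 3 ≤ (Real.exp x + c) ^ 3 := by
    apply pow_le_pow_left₀ hex.le; linarith
  have h4 : Real.exp (2*x) = Real.exp x ^ 3 * Real.exp (-x) := by
    rw [← Real.exp_nat_mul, ← Real.exp_add]; ring_nf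
  rw [h4]
  have hmx : 0 < Real.exp (-x) := Real.exp_pos _
  calc (c+1) * (Real.exp x ^3 * Real.exp (-x)) = (c+1) * Real.exp (-x) * Real.exp x ^ 3 := by ring
  _ ≤ (c+1) * Real.exp (-x) * (Real.exp x + c)^3 := by
      apply mul_le_mul_of_nonneg_left h3; positivity

lemma af_cont (hc : 2 ≤ c) : Continuous (af c) := by
  apply Continuous.div
  · continuity
  · continuity
  · intro x; exact ne_of_gt (pow_pos (den_pos hc x) 3)

lemma rpow_contOn (r : ℝ) : ContinuousOn (fun x : ℝ => x ^ r) (Ioi 0) :=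
  fun x hx => (Real.continuousAt_rpow_const x r (Or.inl (ne_of_gt hx))).continuousWithinAt

lemma integrable_rpow_exp {r : ℝ} (hr : -1 < r) :
    IntegrableOn (fun x : ℝ => x ^ r * Real.exp (-x)) (Ioi 0) := by
  have := Real.GammaIntegral_convergent (show (0:ℝ) < r + 1 by linarith)
  simpa [mul_comm, add_sub_cancel_right] using this

lemma integrable_main (hc : 2 ≤ c) {r : ℝ} (hr : -1 < r) :
    IntegrableOn (fun x : ℝ => x ^ r * af c x) (Ioi 0) := by
  have hb : IntegrableOn (fun x : ℝ => (c+1) * (x ^ r * Real.exp (-x))) (Ioi 0) :=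
    (integrable_rpow_exp hr).const_mul _
  refine Integrable.mono hb ?_ ?_
  · apply AEStronglyMeasurable.mul
    · exact (rpow_contOn r).aestronglyMeasurable measurableSet_Ioi
    · exact (af_cont hc).aestronglyMeasurable.restrict
  · filter_upwards [ae_restrict_mem measurableSet_Ioi] with x hx
    have hx0 : (0:ℝ) < x := hx
    have h1 : 0 ≤ x ^ r := Real.rpow_nonneg hx0.le r
    rw [Real.norm_eq_abs, Real.norm_eq_abs, abs_mul, abs_of_nonneg h1]
    have h2 := af_abs_le hc hx0.le
    calc x ^ r * |af c x| ≤ x ^ r * ((c+1) * Real.exp (-x)) :=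
          mul_le_mul_of_nonneg_left h2 h1
    _ ≤ |(c+1) * (x ^ r * Real.exp (-x))| := by
          rw [abs_of_nonneg (by positivity)]; ring_nf; exact le_rfl

lemma Ff_contAt (hc : 2 ≤ c) {r : ℝ} (hr : -1 < r) : ContinuousAt (Ff c) r := by
  set α : ℝ := (r + -1) / 2 with hα
  have hα1 : -1 < α := by rw [hα]; linarith
  have hα2 : α < r := by rw [hα]; linarith
  set β : ℝ := r + 1 with hβ
  have hβ1 : -1 < β := by rw [hβ]; linarith
  apply continuousAt_of_dominated
    (bound := fun x => (x ^ α + x ^ β) * ((c + 1) * Real.exp (-x)))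
  · filter_upwards with r'
    exact ((rpow_contOn r').aestronglyMeasurable measurableSet_Ioi).mul
      ((af_cont hc).aestronglyMeasurable.restrict)
  · filter_upwards [Ioo_mem_nhds hα2 (by rw [hβ]; linarith : r < β)] with r' hr'
    filter_upwards [ae_restrict_mem measurableSet_Ioi] with x hx
    have hx0 : (0:ℝ) < x := hx
    have h1 : x ^ r' ≤ x ^ α + x ^ β := by
      rcases le_total x 1 with hx1 | hx1
      · have := Real.rpow_le_rpow_of_exponent_ge hx0 hx1 hr'.1.le
        have := Real.rpow_nonneg hx0.le β
        linarith
      · have := Real.rpow_le_rpow_of_exponent_le hx1 hr'.2.le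
        have := Real.rpow_nonneg hx0.le α
        linarith
    have h2 := af_abs_le hc hx0.le
    rw [Real.norm_eq_abs, abs_mul, abs_of_nonneg (Real.rpow_nonneg hx0.le r')]
    have hb1 : (0:ℝ) ≤ x ^ r' := Real.rpow_nonneg hx0.le r'
    exact mul_le_mul h1 h2 (abs_nonneg _) (by positivity)
  · have h1 := (integrable_rpow_exp hα1).const_mul (c + 1)
    have h2 := (integrable_rpow_exp hβ1).const_mul (c + 1)
    refine (h1.add h2).congr ?_
    filter_upwards with x
    simp only [Pi.add_apply]
    ring
  · filter_upwards [ae_restrict_mem measurableSet_Ioi] with x hx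
    exact (Real.continuousAt_const_rpow (ne_of_gt (show (0:ℝ) < x from hx))).mul
      continuousAt_const

lemma logc_pos (hc : 2 ≤ c) : 0 < Real.log c := Real.log_pos (by linarith)

lemma Hh_contAt (hc : 2 ≤ c) {r : ℝ} (hr : -1 < r) : ContinuousAt (Hh c) r := by
  have hx0 := logc_pos hc
  exact (Ff_contAt hc hr).div (Real.continuousAt_const_rpow (ne_of_gt hx0))
    (ne_of_gt (Real.rpow_pos_of_pos hx0 r))

lemma Hh_anti (hc : 2 ≤ c) {r1 r2 : ℝ} (h1 : -1 < r1) (h12 : r1 < r2) :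
    Hh c r2 < Hh c r1 := by
  have h2 : -1 < r2 := h1.trans h12
  set x0 : ℝ := Real.log c with hx0def
  have hx0 : 0 < x0 := logc_pos hc
  set h : ℝ → ℝ := fun x => x ^ r1 * af c x / x0 ^ r1 - x ^ r2 * af c x / x0 ^ r2
    with hhdef
  -- pointwise form and sign
  have hform : ∀ x : ℝ, 0 < x → h x = ((x / x0) ^ r1 - (x / x0) ^ r2) * af c x := by
    intro x hx
    rw [hhdef]
    simp only
    rw [Real.div_rpow hx.le hx0.le, Real.div_rpow hx.le hx0.le]
    ring
  have hsign : ∀ x : ℝ, 0 < x → 0 ≤ h x := by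
    intro x hx
    rw [hform x hx]
    have ht : 0 < x / x0 := div_pos hx hx0
    rcases lt_trichotomy x x0 with hlt | heq | hgt
    · have ht1 : x / x0 < 1 := (div_lt_one hx0).2 hlt
      have hrp := Real.rpow_lt_rpow_of_exponent_gt ht ht1 h12
      have haf := af_pos hc (show x < Real.log c from hlt)
      have := mul_pos (sub_pos.2 hrp) haf
      linarith
    · have : x / x0 = 1 := by rw [heq]; exact div_self (ne_of_gt hx0)
      rw [this]
      simp
    · have ht1 : 1 < x / x0 := (one_lt_div hx0).2 hgt
      have hrp := Real.rpow_lt_rpow_of_exponent_lt ht1 h12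
      have haf := af_neg hc (show Real.log c < x from hgt)
      have := mul_pos_of_neg_of_neg (by linarith : (x/x0) ^ r1 - (x/x0) ^ r2 < 0) haf
      linarith
  have hpos : ∀ x ∈ Ioo (x0 / 2) x0, 0 < h x := by
    intro x hx
    have hx1 : 0 < x := lt_trans (by linarith) hx.1
    rw [hform x hx1]
    have ht : 0 < x / x0 := div_pos hx1 hx0
    have ht1 : x / x0 < 1 := (div_lt_one hx0).2 hx.2
    have hrp := Real.rpow_lt_rpow_of_exponent_gt ht ht1 h12
    have haf := af_pos hc (show x < Real.log c from hx.2)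
    exact mul_pos (sub_pos.2 hrp) haf
  have hint : IntegrableOn h (Ioi 0) :=
    ((integrable_main hc h1).div_const _).sub ((integrable_main hc h2).div_const _)
  -- the integral of h is positive
  have hIpos : 0 < ∫ x in Ioi (0:ℝ), h x := by
    have hsub : Ioc (x0/2) x0 ⊆ Ioi (0:ℝ) := fun x hx => lt_trans (by linarith) hx.1
    have hii : IntervalIntegrable h volume (x0/2) x0 := by
      rw [intervalIntegrable_iff_integrableOn_Ioc_of_le (by linarith)]
      exact hint.mono_set hsub
    have h3 : 0 < ∫ x in (x0/2)..x0, h x :=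
      intervalIntegral.intervalIntegral_pos_of_pos_on hii hpos (by linarith)
    rw [intervalIntegral.integral_of_le (by linarith : x0/2 ≤ x0)] at h3
    refine lt_of_lt_of_le h3 ?_
    apply setIntegral_mono_set hint
    · filter_upwards [ae_restrict_mem measurableSet_Ioi] with x hx
      exact hsign x hx
    · exact HasSubset.Subset.eventuallyLE hsub
  -- conclude
  have hdiff : Hh c r1 - Hh c r2 = ∫ x in Ioi (0:ℝ), h x := by
    rw [Hh, Hh, Ff, Ff, eq_comm]
    rw [hhdef]
    rw [integral_sub ((integrable_main hc h1).div_const _)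
      ((integrable_main hc h2).div_const _)]
    rw [integral_div, integral_div]
  linarith [hdiff ▸ hIpos]

lemma integrable_af (hc : 2 ≤ c) : IntegrableOn (af c) (Ioi 0) := by
  have := integrable_main hc (show (-1:ℝ) < 0 by norm_num)
  simpa using this

lemma Ff_zero (hc : 2 ≤ c) : Ff c 0 = -(1 / (1 + c) ^ 2) := by
  have hF : Ff c 0 = ∫ x in Ioi (0:ℝ), af c x := by
    rw [Ff]
    simp [Real.rpow_zero]
  rw [hF]
  set g : ℝ → ℝ := fun x => Real.exp x / (Real.exp x + c) ^ 2 with hgdef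
  have hderiv : ∀ x ∈ Ici (0:ℝ), HasDerivAt g (af c x) x := by
    intro x _
    have hv : HasDerivAt (fun y => (Real.exp y + c) ^ 2)
        (2 * (Real.exp x + c) ^ 1 * Real.exp x) x :=
      ((Real.hasDerivAt_exp x).add_const c).pow 2
    have hu := Real.hasDerivAt_exp x
    have hne : (Real.exp x + c) ^ 2 ≠ 0 := ne_of_gt (pow_pos (den_pos hc x) 2)
    have := hu.div hv hne
    refine this.congr_deriv ?_
    rw [af, two_mul x, Real.exp_add]
    have hne2 : Real.exp x + c ≠ 0 := ne_of_gt (den_pos hc x)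
    field_simp
    ring
  have htend : Tendsto g atTop (𝓝 0) := by
    apply squeeze_zero (g := fun x => Real.exp (-x)) (fun x => by positivity)
    · intro x
      rw [hgdef]
      simp only
      rw [Real.exp_neg]
      rw [div_le_iff₀ (pow_pos (den_pos hc x) 2)]
      rw [inv_mul_eq_div, le_div_iff₀ (Real.exp_pos x)]
      have h2 : Real.exp x ^ 2 ≤ (Real.exp x + c) ^ 2 :=
        pow_le_pow_left₀ (Real.exp_pos x).le (by linarith) 2
      nlinarith
    · exact Real.tendsto_exp_neg_atTop_nhds_zero
  have := integral_Ioi_of_hasDerivAt_of_tendsto'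
    (f := g) (f' := af c) hderiv (integrable_af hc) htend
  rw [this, hgdef]
  simp [Real.exp_zero]

lemma exists_neg (hc : 2 ≤ c) : ∃ r ∈ Ioo (-1:ℝ) 0, Hh c r < 0 := by
  have hH0 : Hh c 0 < 0 := by
    rw [Hh, Real.rpow_zero, div_one, Ff_zero hc]
    have : (0:ℝ) < (1 + c) ^ 2 := by positivity
    simp only [neg_lt, neg_zero]
    positivity
  have hcont := Hh_contAt hc (show (-1:ℝ) < 0 by norm_num)
  have hev : ∀ᶠ r in 𝓝 (0:ℝ), Hh c r < 0 :=
    hcont.eventually_lt_const hH0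
  obtain ⟨ε, hε, hball⟩ := Metric.eventually_nhds_iff.mp hev
  set δ : ℝ := min ε 1 / 2 with hδdef
  have hδ1 : 0 < δ := by
    have := lt_min hε zero_lt_one
    rw [hδdef]; linarith
  have hδ2 : δ ≤ 1 / 2 := by
    have := min_le_right ε 1
    rw [hδdef]; linarith
  have hδε : δ < ε := by
    have := min_le_left ε 1
    rw [hδdef]; linarith
  refine ⟨-δ, ⟨by linarith, by linarith⟩, hball ?_⟩
  rw [Real.dist_eq, sub_zero, abs_of_nonpos (by linarith)]
  linarith

lemma integrable_exp_Ioi (a : ℝ) : IntegrableOn (fun x : ℝ => Real.exp (-x)) (Ioi a) := by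
  simpa using exp_neg_integrableOn_Ioi a one_pos

lemma exists_pos (hc : 2 ≤ c) : ∃ r ∈ Ioo (-1:ℝ) 0, 0 < Hh c r := by
  set x0 : ℝ := Real.log c with hx0def
  have hx0 : 0 < x0 := logc_pos hc
  set δ : ℝ := min x0 1 / 2 with hδdef
  have hδ0 : 0 < δ := by have := lt_min hx0 zero_lt_one; rw [hδdef]; linarith
  have hδ1 : δ ≤ 1 / 2 := by have := min_le_right x0 1; rw [hδdef]; linarith
  have hδx0 : δ < x0 := by have := min_le_left x0 1; rw [hδdef]; linarith
  have hc1 : (0:ℝ) < c + 1 := by linarith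
  obtain ⟨z, hz, hzmin⟩ := isCompact_Icc.exists_isMinOn (nonempty_Icc.2 hδ0.le)
    ((af_cont hc).continuousOn)
  set m : ℝ := af c z with hm
  have hmpos : 0 < m := af_pos hc (lt_of_le_of_lt hz.2 hδx0)
  have hmle : ∀ x ∈ Icc (0:ℝ) δ, m ≤ af c x := fun x hx => hzmin hx
  have hmub : m ≤ c + 1 := by
    have h1 := af_abs_le hc hz.1
    have h2 : Real.exp (-z) ≤ 1 := Real.exp_le_one_iff.mpr (neg_nonpos.2 hz.1)
    have h3 : m ≤ |af c z| := le_abs_self _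
    nlinarith
  set ε : ℝ := m * δ ^ 2 / (2 * (c + 1)) with hεdef
  have hε0 : 0 < ε := by positivity
  have hεlt : ε < 1 := by
    rw [hεdef, div_lt_one (by positivity)]
    have hδsq : δ ^ 2 ≤ 1 / 4 := by nlinarith
    nlinarith [mul_le_mul hmub hδsq (by positivity) hc1.le]
  set r : ℝ := -1 + ε with hrdef
  have hr1 : -1 < r := by rw [hrdef]; linarith
  have hrIoo : r ∈ Ioo (-1:ℝ) 0 := ⟨hr1, by rw [hrdef]; linarith⟩
  have hrneg : r ≤ 0 := hrIoo.2.le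
  have hre : r + 1 = ε := by rw [hrdef]; ring
  -- split the integral
  have hint1 : IntegrableOn (fun x : ℝ => x ^ r * af c x) (Ioc 0 δ) :=
    (integrable_main hc hr1).mono_set Ioc_subset_Ioi_self
  have hint2 : IntegrableOn (fun x : ℝ => x ^ r * af c x) (Ioi δ) :=
    (integrable_main hc hr1).mono_set (Ioi_subset_Ioi hδ0.le)
  have hsplit : Ff c r = (∫ x in Ioc 0 δ, x ^ r * af c x) + ∫ x in Ioi δ, x ^ r * af c x := by
    rw [Ff, ← Ioc_union_Ioi_eq_Ioi hδ0.le]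
    exact setIntegral_union (Ioc_disjoint_Ioi le_rfl) measurableSet_Ioi hint1 hint2
  -- part 1 lower bound
  have hrpow_int : IntegrableOn (fun x : ℝ => x ^ r) (Ioc 0 δ) := by
    have := intervalIntegral.intervalIntegrable_rpow' (a := 0) (b := δ) hr1
    rwa [intervalIntegrable_iff_integrableOn_Ioc_of_le hδ0.le] at this
  have hpart1 : m * (δ ^ (r + 1) / (r + 1)) ≤ ∫ x in Ioc 0 δ, x ^ r * af c x := by
    have hmono : (∫ x in Ioc 0 δ, m * x ^ r) ≤ ∫ x in Ioc 0 δ, x ^ r * af c x := by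
      apply setIntegral_mono_on (hrpow_int.const_mul m) hint1 measurableSet_Ioc
      intro x hx
      have hxr : 0 ≤ x ^ r := Real.rpow_nonneg hx.1.le r
      have h4 := hmle x ⟨hx.1.le, hx.2⟩
      calc m * x ^ r ≤ af c x * x ^ r := mul_le_mul_of_nonneg_right h4 hxr
      _ = x ^ r * af c x := mul_comm _ _
    have hcalc : (∫ x in Ioc 0 δ, m * x ^ r) = m * (δ ^ (r + 1) / (r + 1)) := by
      rw [MeasureTheory.integral_const_mul]
      congr 1
      rw [← intervalIntegral.integral_of_le hδ0.le, integral_rpow (Or.inl hr1),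
        Real.zero_rpow (ne_of_gt (by linarith : (0:ℝ) < r + 1))]
      ring
    linarith [hcalc ▸ hmono]
  -- part 2 lower bound
  have hpart2 : -((c + 1) / δ) ≤ ∫ x in Ioi δ, x ^ r * af c x := by
    have hbd : ∀ x ∈ Ioi δ, |x ^ r * af c x| ≤ δ⁻¹ * ((c + 1) * Real.exp (-x)) := by
      intro x hx
      have hxδ : δ ≤ x := le_of_lt hx
      have hxpos : 0 < x := lt_of_lt_of_le hδ0 hxδ
      have h1 : x ^ r ≤ δ ^ r := Real.rpow_le_rpow_of_nonpos hδ0 hxδ hrneg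
      have h2 : δ ^ r ≤ δ⁻¹ := by
        have := Real.rpow_le_rpow_of_exponent_ge hδ0 (by linarith : δ ≤ 1)
          (by linarith : (-1:ℝ) ≤ r)
        rwa [Real.rpow_neg_one] at this
      have h3 := af_abs_le hc hxpos.le
      rw [abs_mul, abs_of_nonneg (Real.rpow_nonneg hxpos.le r)]
      exact mul_le_mul (h1.trans h2) h3 (abs_nonneg _) (by positivity)
    have hbint : IntegrableOn (fun x : ℝ => δ⁻¹ * ((c + 1) * Real.exp (-x))) (Ioi δ) :=
      ((integrable_exp_Ioi δ).const_mul (c + 1)).const_mul δ⁻¹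
    have habs : |∫ x in Ioi δ, x ^ r * af c x| ≤ (c + 1) / δ := by
      have step1 : |∫ x in Ioi δ, x ^ r * af c x| ≤ ∫ x in Ioi δ, |x ^ r * af c x| := by
        simpa [Real.norm_eq_abs, abs_mul] using
          norm_integral_le_integral_norm (μ := volume.restrict (Ioi δ))
            (f := fun x : ℝ => x ^ r * af c x)
      have step2 : (∫ x in Ioi δ, |x ^ r| * |af c x|) ≤
          ∫ x in Ioi δ, δ⁻¹ * ((c + 1) * Real.exp (-x)) := by
        refine setIntegral_mono_on ?_ hbint measurableSet_Ioi ?_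
        · exact hint2.abs.congr (Eventually.of_forall fun x => (abs_mul _ _))
        · intro x hx
          rw [← abs_mul]
          exact hbd x hx
      have step3 : (∫ x in Ioi δ, δ⁻¹ * ((c + 1) * Real.exp (-x))) ≤ (c + 1) / δ := by
        rw [MeasureTheory.integral_const_mul, MeasureTheory.integral_const_mul,
          integral_exp_neg_Ioi]
        have h5 : Real.exp (-δ) ≤ 1 := Real.exp_le_one_iff.mpr (by linarith)
        rw [div_eq_inv_mul]
        have : (c + 1) * Real.exp (-δ) ≤ (c + 1) * 1 := by nlinarith
        have h6 : (0:ℝ) < δ⁻¹ := by positivity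
        nlinarith
      simp only [← abs_mul] at step2
      linarith
    have := neg_abs_le (∫ x in Ioi δ, x ^ r * af c x)
    linarith
  -- combine
  have h1 : 2 * (c + 1) / δ ≤ m * (δ ^ (r + 1) / (r + 1)) := by
    have hδr : δ ≤ δ ^ (r + 1) := by
      have := Real.rpow_le_rpow_of_exponent_ge hδ0 (by linarith : δ ≤ 1)
        (by linarith : r + 1 ≤ 1)
      rwa [Real.rpow_one] at this
    have h2 : m * δ / ε = 2 * (c + 1) / δ := by
      rw [hεdef]
      field_simp
    have h3 : m * δ / ε ≤ m * δ ^ (r + 1) / ε := by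
      apply div_le_div_of_nonneg_right ?_ ?_
      · exact mul_le_mul_of_nonneg_left hδr hmpos.le
      · exact hε0.le
    calc 2 * (c + 1) / δ = m * δ / ε := h2.symm
    _ ≤ m * δ ^ (r + 1) / ε := h3
    _ = m * (δ ^ (r + 1) / (r + 1)) := by rw [hre]; ring
  have hpos : 0 < Ff c r := by
    rw [hsplit]
    have : 0 < (c + 1) / δ := by positivity
    have hq : 2 * (c + 1) / δ - (c + 1) / δ = (c + 1) / δ := by ring
    linarith
  exact ⟨r, hrIoo, div_pos hpos (Real.rpow_pos_of_pos hx0 r)⟩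

end SmoothAux

/-- **Existence of the smoothing exponent `r(q)`**: there is a unique `r(q) ∈ (−1,0)`
with `∫_0^∞ x^{r(q)} a(x) dx = 0`, the integral being positive below `r(q)` and
negative above. -/
theorem smoothing_exponent_exists (q : ℕ) (hq : 3 ≤ q) :
    ∃ rq : ℝ, rq ∈ Ioo (-1 : ℝ) 0 ∧
      (∫ x in Ioi (0 : ℝ), x ^ rq * afun q x) = 0 ∧
      (∀ r ∈ Ioo (-1 : ℝ) rq, 0 < ∫ x in Ioi (0 : ℝ), x ^ r * afun q x) ∧
      (∀ r ∈ Ioo rq (0 : ℝ), (∫ x in Ioi (0 : ℝ), x ^ r * afun q x) < 0) ∧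
      (∀ r ∈ Ioo (-1 : ℝ) 0, (∫ x in Ioi (0 : ℝ), x ^ r * afun q x) = 0 → r = rq) := by
  classical
  set c : ℝ := (q : ℝ) - 1 with hcdef
  have hc : 2 ≤ c := by
    have : (3:ℝ) ≤ (q:ℝ) := by exact_mod_cast hq
    rw [hcdef]; linarith
  have hafeq : afun (q:ℝ) = SmoothAux.af c := by
    funext x
    simp only [afun, SmoothAux.af, hcdef]
    rw [add_sub_assoc]
  have hFeq : ∀ r : ℝ, (∫ x in Ioi (0:ℝ), x ^ r * afun (q:ℝ) x) = SmoothAux.Ff c r := by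
    intro r; rw [SmoothAux.Ff, hafeq]
  have hx0 := SmoothAux.logc_pos hc
  obtain ⟨r1, hr1, hH1⟩ := SmoothAux.exists_pos hc
  obtain ⟨r2, hr2, hH2⟩ := SmoothAux.exists_neg hc
  have hr12 : r1 < r2 := by
    by_contra hcon
    push_neg at hcon
    rcases eq_or_lt_of_le hcon with heq | hlt
    · rw [heq] at hH2; linarith
    · have := SmoothAux.Hh_anti hc hr2.1 hlt; linarith
  have hcontOn : ContinuousOn (SmoothAux.Hh c) (Icc r1 r2) := fun r hr =>
    (SmoothAux.Hh_contAt hc (lt_of_lt_of_le hr1.1 hr.1)).continuousWithinAt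
  have hIVT := intermediate_value_Icc' hr12.le hcontOn
  obtain ⟨rq, hrqmem, hHrq⟩ := hIVT ⟨hH2.le, hH1.le⟩
  have hrqIoo : rq ∈ Ioo (-1:ℝ) 0 :=
    ⟨lt_of_lt_of_le hr1.1 hrqmem.1, lt_of_le_of_lt hrqmem.2 hr2.2⟩
  have hFH : ∀ r : ℝ, SmoothAux.Ff c r = SmoothAux.Hh c r * (Real.log c) ^ r := by
    intro r
    rw [SmoothAux.Hh, div_mul_cancel₀]
    exact ne_of_gt (Real.rpow_pos_of_pos hx0 r)
  refine ⟨rq, hrqIoo, ?_, ?_, ?_, ?_⟩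
  · rw [hFeq, hFH, hHrq, zero_mul]
  · intro r hr
    rw [hFeq, hFH]
    have hpos : 0 < SmoothAux.Hh c r := by
      have := SmoothAux.Hh_anti hc hr.1 hr.2
      rw [hHrq] at this
      linarith
    exact mul_pos hpos (Real.rpow_pos_of_pos hx0 r)
  · intro r hr
    rw [hFeq, hFH]
    have hneg : SmoothAux.Hh c r < 0 := by
      have := SmoothAux.Hh_anti hc hrqIoo.1 hr.1
      rw [hHrq] at this
      linarith
    exact mul_neg_of_neg_of_pos hneg (Real.rpow_pos_of_pos hx0 r)
  · intro r hr hF0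
    have hH0 : SmoothAux.Hh c r = 0 := by
      rw [SmoothAux.Hh, ← hFeq r, hF0, zero_div]
    rcases lt_trichotomy r rq with h | h | h
    · have := SmoothAux.Hh_anti hc hr.1 h
      rw [hHrq] at this
      linarith
    · exact h
    · have := SmoothAux.Hh_anti hc hrqIoo.1 h
      rw [hHrq] at this
      linarith
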